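/- Let ρ ∈ (0,1) and ε > 0. If x : ℝ → ℝ is differentiable, x(0) < 0, and x'(t) ≥ ε · |x(t)|^ρ whenever x(t) < 0, then there exists T ≤ (-x(0))^(1-ρ) / (ε(1-ρ)) such that x(T) ≥ 0. -/

import Mathlib

theorem stmt1 (ε ρ : ℝ) (hε : 0 < ε) (hρ0 : 0 < ρ) (hρ1 : ρ < 1)
    (x : ℝ → ℝ) (hx : Differentiable ℝ x) (h0 : x 0 < 0)
    (hineq : ∀ t ≥ (0:ℝ), x t < 0 → deriv x t ≥ ε * |x t| ^ ρ) :
    ∃ T : ℝ, 0 ≤ T ∧ T ≤ (-(x 0)) ^ (1 - ρ) / (ε * (1 - ρ)) ∧ x T ≥ 0 := by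
  set c : ℝ := 1 - ρ with hc
  have hcpos : 0 < c := by simp [hc]; linarith
  set T : ℝ := (-(x 0)) ^ c / (ε * c) with hT
  have hx0pos : 0 < -(x 0) := by linarith
  have hden : 0 < ε * c := mul_pos hε hcpos
  have hTpos : 0 < T := div_pos (Real.rpow_pos_of_pos hx0pos c) hden
  by_contra hcon
  push_neg at hcon
  have hneg : ∀ t ∈ Set.Icc (0:ℝ) T, x t < 0 := fun t ht => hcon t ht.1 ht.2
  set f : ℝ → ℝ := fun t => (-(x t)) ^ c + ε * c * t with hf
  -- derivative of f at points where x t < 0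
  have hderiv : ∀ t, x t < 0 → HasDerivAt f
      ((-(deriv x t)) * c * (-(x t)) ^ (c - 1) + ε * c) t := by
    intro t ht
    have h1 : HasDerivAt (fun s => -(x s)) (-(deriv x t)) t := (hx t).hasDerivAt.neg
    have h2 := h1.rpow_const (p := c) (Or.inl (neg_pos.mpr ht).ne')
    have h3 : HasDerivAt (fun s : ℝ => ε * c * s) (ε * c) t := by
      simpa using (hasDerivAt_id t).const_mul (ε * c)
    exact h2.add h3
  have hanti : AntitoneOn f (Set.Icc 0 T) := by
    apply antitoneOn_of_deriv_nonpos (convex_Icc 0 T)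
    · apply ContinuousOn.add
      · exact (Real.continuous_rpow_const hcpos.le).comp (hx.continuous.neg) |>.continuousOn
      · exact (continuous_const.mul continuous_id).continuousOn
    · intro t ht
      rw [interior_Icc] at ht
      exact ((hderiv t (hneg t ⟨ht.1.le, ht.2.le⟩)).differentiableAt).differentiableWithinAt
    · intro t ht
      rw [interior_Icc] at ht
      have hxt : x t < 0 := hneg t ⟨ht.1.le, ht.2.le⟩
      have hxtp : 0 < -(x t) := by linarith
      rw [(hderiv t hxt).deriv]
      have hin := hineq t ht.1.le hxt
      have habs : |x t| = -(x t) := abs_of_neg hxt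
      rw [habs] at hin
      have hc1 : c - 1 = -ρ := by simp [hc]
      have hpow : (-(x t)) ^ (c - 1) * (-(x t)) ^ ρ = 1 := by
        rw [hc1, ← Real.rpow_add hxtp]; simp
      have hpowpos : 0 < (-(x t)) ^ (c - 1) := Real.rpow_pos_of_pos hxtp _
      -- deriv x t ≥ ε * (-(x t))^ρ, so (-(deriv x t)) * (-(x t))^(c-1) ≤ -ε
      have key : (-(deriv x t)) * (-(x t)) ^ (c - 1) ≤ -ε := by
        have : ε * (-(x t)) ^ ρ * (-(x t)) ^ (c - 1) ≤ deriv x t * (-(x t)) ^ (c - 1) :=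
          mul_le_mul_of_nonneg_right hin hpowpos.le
        calc (-(deriv x t)) * (-(x t)) ^ (c - 1) ≤ -(ε * (-(x t)) ^ ρ * (-(x t)) ^ (c - 1)) := by
              linarith
          _ = -ε := by rw [mul_assoc, mul_comm ((-(x t)) ^ ρ), hpow]; ring
      nlinarith [key, hcpos]
  have hle := hanti (Set.left_mem_Icc.2 hTpos.le) (Set.right_mem_Icc.2 hTpos.le) hTpos.le
  -- f T ≤ f 0, i.e. (-(x T))^c + ε c T ≤ (-(x 0))^c, and ε c T = (-(x 0))^c
  have hεcT : ε * c * T = (-(x 0)) ^ c := by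
    rw [hT]; field_simp
  have hxT : 0 < (-(x T)) ^ c :=
    Real.rpow_pos_of_pos (by linarith [hneg T (Set.right_mem_Icc.2 hTpos.le)]) c
  simp only [hf] at hle
  linarith
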